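/- With Θ̂ⱼ = (1/τ̂ⱼ²)(−γ̂ⱼ with a 1 in position j), i.e. XΘ̂ⱼᵀ/n = (Xⱼ − X₋ⱼγ̂ⱼ)/(n τ̂ⱼ²), the nodewise-Lasso construction satisfies XⱼᵀXΘ̂ⱼᵀ/n = 1 and ‖X₋ⱼᵀXΘ̂ⱼᵀ/n‖_∞ ≤ λⱼ/τ̂ⱼ², hence ‖eⱼ − Σ̂Θ̂ⱼᵀ‖_∞ ≤ λⱼ/τ̂ⱼ² where Σ̂ = XᵀX/n. -/
import Mathlib


open Matrix

/-- Properties of the nodewise-Lasso row Θ̂ⱼ of the approximate inverse: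
XⱼᵀXΘ̂ⱼᵀ/n = 1, ‖X₋ⱼᵀXΘ̂ⱼᵀ/n‖_∞ ≤ λⱼ/τ̂ⱼ², and hence
‖eⱼ − Σ̂Θ̂ⱼᵀ‖_∞ ≤ λⱼ/τ̂ⱼ² with Σ̂ = XᵀX/n. -/
theorem stmt_13 (n p : ℕ) (hn : 0 < n) (X : Matrix (Fin n) (Fin p) ℝ)
    (j : Fin p) (lamj : ℝ) (hlam : 0 < lamj)
    (γhat : Fin p → ℝ) (hγj : γhat j = 0)
    (τsq : ℝ) (hτ : τsq = (∑ i, X i j * (X i j - (X *ᵥ γhat) i)) / n)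
    (hτpos : 0 < τsq)
    (hKKT2 : ∀ l, l ≠ j → |(∑ i, X i l * (X i j - (X *ᵥ γhat) i)) / n| ≤ lamj)
    (Θrow : Fin p → ℝ)
    (hΘ : Θrow = fun l => if l = j then 1 / τsq else -γhat l / τsq) :
    (∑ i, X i j * (X *ᵥ Θrow) i) / n = 1 ∧
      (∀ l, l ≠ j → |(∑ i, X i l * (X *ᵥ Θrow) i) / n| ≤ lamj / τsq) ∧
      (∀ l, |(if l = j then (1 : ℝ) else 0) - (((Xᵀ * X) *ᵥ Θrow) l) / n| ≤
        lamj / τsq) := by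
  have hτne : τsq ≠ 0 := ne_of_gt hτpos
  have hkey : ∀ i, (X *ᵥ Θrow) i = (X i j - (X *ᵥ γhat) i) / τsq := by
    intro i
    simp only [hΘ, mulVec, dotProduct]
    have : ∀ l, X i l * (if l = j then 1 / τsq else -γhat l / τsq)
        = X i l * (if l = j then (1:ℝ) else 0) / τsq - X i l * γhat l / τsq := by
      intro l
      by_cases h : l = j
      · subst h; simp [hγj]; ring
      · simp [h]; ring
    rw [Finset.sum_congr rfl (fun l _ => this l), Finset.sum_sub_distrib]
    simp only [mul_ite, mul_one, mul_zero, ← Finset.sum_div, Finset.sum_ite_eq',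
      Finset.mem_univ, if_true]
    rw [sub_div]
  have hsum : ∀ l, (∑ i, X i l * (X *ᵥ Θrow) i)
      = (∑ i, X i l * (X i j - (X *ᵥ γhat) i)) / τsq := by
    intro l
    simp only [hkey, ← mul_div_assoc, ← Finset.sum_div]
  have h1 : (∑ i, X i j * (X *ᵥ Θrow) i) / n = 1 := by
    rw [hsum]
    rw [div_div, mul_comm, ← div_div, ← hτ]
    exact div_self hτne
  have h2 : ∀ l, l ≠ j → |(∑ i, X i l * (X *ᵥ Θrow) i) / n| ≤ lamj / τsq := by
    intro l hl
    rw [hsum, div_div, mul_comm, ← div_div, abs_div, abs_of_pos hτpos]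
    gcongr
    exact hKKT2 l hl
  refine ⟨h1, h2, ?_⟩
  intro l
  have hXtX : ((Xᵀ * X) *ᵥ Θrow) l = ∑ i, X i l * (X *ᵥ Θrow) i := by
    rw [← mulVec_mulVec]
    simp [mulVec, dotProduct, transpose_apply]
  by_cases h : l = j
  · subst h
    simp [hXtX, h1, le_div_iff₀ hτpos, le_of_lt hlam]
  · simp only [if_neg h, hXtX, zero_sub, abs_neg]
    exact h2 l h
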